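/- arXiv:2311.04367 — 5 statements merged into one kernel-verified Lean document; each statement's English description precedes it below -/
import Mathlib

section
/- Fix q ∈ ℂ with 0 < |q| < 1 and n ∈ ℕ. Then lim_{y → q^{−n}} (y − q^{−n}) / (y; q)_∞ = (−1)^{n+1} q^{n(n−1)/2} / ( (q; q)_n (q; q)_∞ ). -/
open Filter Topology

/-- The infinite q-Pochhammer symbol `(x; q)_∞ = ∏_{k=0}^∞ (1 - q^k x)`. -/
noncomputable def qPochInf (q x : ℂ) : ℂ := ∏' k : ℕ, (1 - q ^ k * x)

/-- The finite q-Pochhammer symbol `(x; q)_n = ∏_{k=0}^{n-1} (1 - q^k x)`. -/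
noncomputable def qPochFin (q x : ℂ) (n : ℕ) : ℂ := ∏ k ∈ Finset.range n, (1 - q ^ k * x)

namespace QPochAux

lemma factor_ne {z : ℂ} (h : ‖z‖ < 1) : (1 : ℂ) - z ≠ 0 := by
  intro h0
  have : z = 1 := by linear_combination -h0
  rw [this] at h; simp at h

lemma norm_fac {q x : ℂ} (hq1 : ‖q‖ < 1) (hx : ‖x‖ ≤ 1 / 2) (k : ℕ) :
    ‖q ^ k * x‖ ≤ 1 / 2 := by
  rw [norm_mul, norm_pow]
  calc ‖q‖ ^ k * ‖x‖ ≤ 1 * (1 / 2) :=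
        mul_le_mul (pow_le_one₀ (norm_nonneg q) hq1.le) hx (norm_nonneg x) zero_le_one
    _ = 1 / 2 := one_mul _

lemma summable_log {q : ℂ} (hq1 : ‖q‖ < 1) {x : ℂ} (hx : ‖x‖ ≤ 1 / 2) :
    Summable fun k : ℕ => Complex.log (1 - q ^ k * x) := by
  apply Summable.of_norm_bounded (g := fun k => 3 / 2 * ‖x‖ * ‖q‖ ^ k)
  · exact (summable_geometric_of_lt_one (norm_nonneg q) hq1).mul_left _
  · intro k
    have hk : ‖-(q ^ k * x)‖ ≤ 1 / 2 := by rw [norm_neg]; exact norm_fac hq1 hx k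
    have h := Complex.norm_log_one_add_half_le_self hk
    rw [show (1 : ℂ) + -(q ^ k * x) = 1 - q ^ k * x by ring] at h
    refine h.trans ?_
    rw [norm_neg, norm_mul, norm_pow]
    ring_nf; nlinarith [norm_nonneg x, pow_nonneg (norm_nonneg q) k]

lemma exp_eq {q : ℂ} (hq1 : ‖q‖ < 1) {x : ℂ} (hx : ‖x‖ ≤ 1 / 2) :
    qPochInf q x = Complex.exp (∑' k : ℕ, Complex.log (1 - q ^ k * x)) := by
  have h := Complex.cexp_tsum_eq_tprod (f := fun (k : ℕ) => 1 - q ^ k * x)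
    (fun k => factor_ne (lt_of_le_of_lt (norm_fac hq1 hx k) one_half_lt_one))
    (summable_log hq1 hx)
  exact h.symm

lemma ne_zero {q : ℂ} (hq1 : ‖q‖ < 1) {x : ℂ} (hx : ‖x‖ ≤ 1 / 2) : qPochInf q x ≠ 0 := by
  rw [exp_eq hq1 hx]; exact Complex.exp_ne_zero _

lemma multipliable {q : ℂ} (hq1 : ‖q‖ < 1) {x : ℂ} (hx : ‖x‖ ≤ 1 / 2) :
    Multipliable fun k : ℕ => 1 - q ^ k * x :=
  Complex.multipliable_of_summable_log (summable_log hq1 hx)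

lemma split {q : ℂ} (hq1 : ‖q‖ < 1) (x : ℂ) (m : ℕ) (hm : ‖q ^ m * x‖ ≤ 1 / 2) :
    qPochInf q x = qPochFin q x m * qPochInf q (q ^ m * x) := by
  have h2 : (fun i : ℕ => 1 - q ^ (i + m) * x) = fun i : ℕ => 1 - q ^ i * (q ^ m * x) := by
    funext i; rw [pow_add]; ring
  have h : Multipliable fun i : ℕ => 1 - q ^ (i + m) * x := by
    rw [h2]; exact multipliable hq1 hm
  rw [qPochInf, ← Multipliable.prod_mul_tprod_nat_mul' (f := fun i : ℕ => 1 - q ^ i * x) (k := m) h]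
  congr 1
  rw [qPochInf]
  exact tprod_congr fun i => by rw [pow_add]; ring

lemma tendsto_qPochInf {q : ℂ} (hq1 : ‖q‖ < 1) {x₀ : ℂ} (hx₀ : ‖x₀‖ < 1 / 2) :
    Tendsto (qPochInf q) (𝓝 x₀) (𝓝 (qPochInf q x₀)) := by
  have hcont : ContinuousOn (fun x : ℂ => ∑' k : ℕ, Complex.log (1 - q ^ k * x))
      (Metric.closedBall 0 (1 / 2)) := by
    apply continuousOn_tsum (u := fun k : ℕ => 3 / 4 * ‖q‖ ^ k)
    · intro k x hx
      rw [Metric.mem_closedBall, dist_zero_right] at hx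
      refine (ContinuousAt.continuousWithinAt (ContinuousAt.clog ?_ ?_))
      · exact (continuous_const.sub (continuous_const.mul continuous_id)).continuousAt
      · apply Complex.mem_slitPlane_iff.mpr
        left
        have h1 : ‖q ^ k * x‖ ≤ 1 / 2 := norm_fac hq1 hx k
        have h2 : (q ^ k * x).re ≤ ‖q ^ k * x‖ := Complex.re_le_norm _
        simp only [Complex.sub_re, Complex.one_re]
        linarith
    · exact (summable_geometric_of_lt_one (norm_nonneg q) hq1).mul_left _
    · intro k x hx
      rw [Metric.mem_closedBall, dist_zero_right] at hx
      have hk : ‖-(q ^ k * x)‖ ≤ 1 / 2 := by rw [norm_neg]; exact norm_fac hq1 hx k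
      have h := Complex.norm_log_one_add_half_le_self hk
      rw [show (1 : ℂ) + -(q ^ k * x) = 1 - q ^ k * x by ring] at h
      refine h.trans ?_
      rw [norm_neg, norm_mul, norm_pow]
      nlinarith [pow_nonneg (norm_nonneg q) k, norm_nonneg x]
  have hmem : Metric.closedBall (0 : ℂ) (1 / 2) ∈ 𝓝 x₀ := by
    apply mem_nhds_iff.2
    exact ⟨Metric.ball 0 (1 / 2), Metric.ball_subset_closedBall, Metric.isOpen_ball,
      by rwa [Metric.mem_ball, dist_zero_right]⟩
  have hca : ContinuousAt (fun x : ℂ => ∑' k : ℕ, Complex.log (1 - q ^ k * x)) x₀ :=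
    hcont.continuousAt hmem
  have := Complex.continuous_exp.continuousAt.comp hca
  refine (this.tendsto.congr' ?_) |>.mono_right (le_of_eq ?_)
  · filter_upwards [hmem] with x hx
    rw [Metric.mem_closedBall, dist_zero_right] at hx
    exact (exp_eq hq1 hx).symm
  · rw [Function.comp_apply, ← exp_eq hq1 hx₀.le]

end QPochAux


open QPochAux in
/-- The residue of `1/(y;q)_∞` at its simple zero `y = q^{-n}`:
`lim_{y → q^{-n}} (y - q^{-n})/(y;q)_∞ = (-1)^{n+1} q^{n(n-1)/2} / ((q;q)_n (q;q)_∞)`. -/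
theorem stmt4 (q : ℂ) (hq0 : 0 < ‖q‖) (hq1 : ‖q‖ < 1) (n : ℕ) :
    Tendsto (fun y : ℂ => (y - q ^ (-(n : ℤ))) / qPochInf q y) (𝓝[≠] (q ^ (-(n : ℤ))))
      (𝓝 ((-1) ^ (n + 1) * q ^ (n * (n - 1) / 2) / (qPochFin q q n * qPochInf q q))) := by
  have hq : q ≠ 0 := norm_pos_iff.mp hq0
  set c : ℂ := q ^ (-(n : ℤ)) with hc
  obtain ⟨j, hj⟩ := exists_pow_lt_of_lt_one (show (0:ℝ) < 1/4 by norm_num) hq1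
  set m : ℕ := n + 1 + j with hm
  have hmc : q ^ m * c = q ^ (j + 1) := by
    rw [hc, ← zpow_natCast q m, ← zpow_add₀ hq, show (m : ℤ) + -(n : ℤ) = ((j + 1 : ℕ) : ℤ) by
      push_cast [hm]; ring, zpow_natCast]
  have hnorm_mc : ‖q ^ m * c‖ < 1 / 2 := by
    rw [hmc, norm_pow, pow_succ]
    calc ‖q‖ ^ j * ‖q‖ ≤ ‖q‖ ^ j * 1 := by
          exact mul_le_mul_of_nonneg_left hq1.le (pow_nonneg (norm_nonneg q) j)
      _ = ‖q‖ ^ j := mul_one _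
      _ < 1 / 4 := hj
      _ < 1 / 2 := by norm_num
  have hqnc : q ^ n * c = 1 := by
    rw [hc, ← zpow_natCast q n, ← zpow_add₀ hq, add_neg_cancel, zpow_zero]
  -- the regular part
  set W : ℂ → ℂ := fun y =>
    qPochFin q y n * (∏ k ∈ Finset.Ico (n + 1) m, (1 - q ^ k * y)) * qPochInf q (q ^ m * y)
    with hW
  -- key factorization
  have key : ∀ y : ℂ, y ≠ c → ‖q ^ m * y‖ ≤ 1 / 2 →
      (y - c) / qPochInf q y = 1 / (-(q ^ n) * W y) := by
    intro y hyne hy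
    have hyc : y - c ≠ 0 := sub_ne_zero.mpr hyne
    have hsplit := split hq1 y m hy
    have hfin : qPochFin q y m
        = qPochFin q y n * (1 - q ^ n * y) * ∏ k ∈ Finset.Ico (n + 1) m, (1 - q ^ k * y) := by
      rw [qPochFin, ← Finset.prod_range_mul_prod_Ico _ (show n + 1 ≤ m by omega),
        Finset.prod_range_succ, qPochFin]
    have hfac : 1 - q ^ n * y = -(q ^ n) * (y - c) := by linear_combination -hqnc
    rw [hsplit, hfin, hfac]
    rw [show qPochFin q y n * (-(q ^ n) * (y - c)) *
        (∏ k ∈ Finset.Ico (n + 1) m, (1 - q ^ k * y)) * qPochInf q (q ^ m * y)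
        = (y - c) * (-(q ^ n) * W y) by simp only [hW]; ring]
    rw [div_mul_cancel_left₀ hyc, one_div]
  -- limit of W
  have hWlim : Tendsto W (𝓝 c) (𝓝 (W c)) := by
    apply Tendsto.mul (Tendsto.mul ?_ ?_) ?_
    · exact ((continuous_finset_prod _ (fun k _ =>
        (continuous_const.sub (continuous_const.mul continuous_id)))).tendsto c)
    · exact ((continuous_finset_prod _ (fun k _ =>
        (continuous_const.sub (continuous_const.mul continuous_id)))).tendsto c)
    · exact (tendsto_qPochInf hq1 hnorm_mc).comp
        ((continuous_const.mul continuous_id).tendsto c)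
  -- algebraic identification of W c
  have hIco : (∏ k ∈ Finset.Ico (n + 1) m, (1 - q ^ k * c)) = qPochFin q q j := by
    rw [Finset.prod_Ico_eq_prod_range, qPochFin, show m - (n + 1) = j by omega]
    refine Finset.prod_congr rfl fun k _ => ?_
    congr 1
    rw [hc, ← zpow_natCast q (n + 1 + k), ← zpow_add₀ hq,
      show ((n + 1 + k : ℕ) : ℤ) + -(n : ℤ) = ((k + 1 : ℕ) : ℤ) by push_cast; ring,
      zpow_natCast, pow_succ, mul_comm]
  have hTail : qPochFin q q j * qPochInf q (q ^ m * c) = qPochInf q q := by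
    have h := split hq1 q j (by rw [← pow_succ, ← hmc]; exact hnorm_mc.le)
    rw [h, ← pow_succ, ← hmc]
  have hQn : qPochFin q c n = (-1) ^ n * (q ^ (n * (n - 1) / 2) * c ^ n) * qPochFin q q n := by
    rw [qPochFin]
    have step : ∀ k ∈ Finset.range n,
        (1 - q ^ k * c) = -(q ^ k * c) * (1 - q ^ (n - k) ) := by
      intro k hk
      rw [Finset.mem_range] at hk
      have : q ^ k * q ^ (n - k) = q ^ n := by rw [← pow_add]; congr 1; omega
      linear_combination (-c) * this - hqnc
    rw [Finset.prod_congr rfl step, Finset.prod_mul_distrib]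
    have h1 : (∏ k ∈ Finset.range n, -(q ^ k * c)) = (-1) ^ n * (q ^ (n * (n - 1) / 2) * c ^ n) := by
      have : ∀ k, -(q ^ k * c) = (-1) * q ^ k * c := fun k => by ring
      simp_rw [this]
      rw [Finset.prod_mul_distrib, Finset.prod_mul_distrib, Finset.prod_const, Finset.prod_const,
        Finset.prod_pow_eq_pow_sum, Finset.sum_range_id, Finset.card_range, mul_assoc]
    have h2 : (∏ k ∈ Finset.range n, (1 - q ^ (n - k))) = qPochFin q q n := by
      rw [qPochFin, ← Finset.prod_range_reflect (fun k => 1 - q ^ k * q) n]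
      refine Finset.prod_congr rfl fun k hk => ?_
      rw [Finset.mem_range] at hk
      rw [← pow_succ, show n - 1 - k + 1 = n - k by omega]
    rw [h1, h2]
  -- scalar computation
  have hdvd : 2 ∣ n * (n - 1) := by
    rcases Nat.even_or_odd n with h | h
    · exact Dvd.dvd.mul_right h.two_dvd _
    · exact Dvd.dvd.mul_left (Nat.Odd.sub_odd h odd_one).two_dvd _
  have hscal : q ^ n * (q ^ (n * (n - 1) / 2) * c ^ n) = (q ^ (n * (n - 1) / 2) : ℂ)⁻¹ := by
    have h2e : ((n * (n - 1) / 2 : ℕ) : ℤ) * 2 = (n : ℤ) * (n : ℤ) - n := by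
      have h := Nat.div_mul_cancel hdvd
      rcases Nat.eq_zero_or_pos n with h0 | h0
      · subst h0; simp
      · have : ((n * (n - 1) / 2 : ℕ) : ℤ) * 2 = ((n : ℤ)) * ((n : ℤ) - 1) := by
          rw [show ((n:ℤ)) * ((n:ℤ) - 1) = ((n * (n-1) : ℕ) : ℤ) by push_cast [Nat.cast_sub h0]; ring]
          exact_mod_cast h
        linarith [this]
    rw [hc, ← zpow_natCast q n, ← zpow_natCast q (n * (n - 1) / 2),
      ← zpow_natCast (q ^ (-(n : ℤ))) n, ← zpow_mul, ← zpow_add₀ hq, ← zpow_add₀ hq, ← zpow_neg]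
    congr 1
    linear_combination h2e
  have hDval : -(q ^ n) * W c
      = (-1) ^ (n + 1) * ((q : ℂ) ^ (n * (n - 1) / 2))⁻¹ * (qPochFin q q n * qPochInf q q) := by
    have expand : -(q ^ n) * W c
        = ((-1:ℂ) * (-1:ℂ) ^ n) * (q ^ n * (q ^ (n * (n - 1) / 2) * c ^ n)) *
          (qPochFin q q n * (qPochFin q q j * qPochInf q (q ^ m * c))) := by
      rw [hW]
      simp only
      rw [hQn, hIco]
      ring
    rw [expand, hTail, hscal, pow_succ]
    ring
  -- nonvanishing
  have hPfin : ∀ k : ℕ, qPochFin q q k ≠ 0 := by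
    intro k
    rw [qPochFin]
    apply Finset.prod_ne_zero_iff.mpr
    intro i _
    apply factor_ne
    rw [norm_mul, norm_pow]
    calc ‖q‖ ^ i * ‖q‖ ≤ 1 * ‖q‖ :=
          mul_le_mul_of_nonneg_right (pow_le_one₀ (norm_nonneg q) hq1.le) (norm_nonneg q)
      _ = ‖q‖ := one_mul _
      _ < 1 := hq1
  have hPinf : qPochInf q q ≠ 0 := by
    rw [← hTail]
    exact mul_ne_zero (hPfin j) (ne_zero hq1 hnorm_mc.le)
  have hD : -(q ^ n) * W c ≠ 0 := by
    rw [hDval]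
    exact mul_ne_zero (mul_ne_zero (pow_ne_zero _ (by norm_num))
      (inv_ne_zero (pow_ne_zero _ hq))) (mul_ne_zero (hPfin n) hPinf)
  -- assemble
  have hlim : Tendsto (fun y : ℂ => 1 / (-(q ^ n) * W y)) (𝓝[≠] c)
      (𝓝 (1 / (-(q ^ n) * W c))) := by
    apply Tendsto.mono_left ?_ nhdsWithin_le_nhds
    exact tendsto_const_nhds.div (tendsto_const_nhds.mul hWlim) hD
  have hval : 1 / (-(q ^ n) * W c)
      = (-1) ^ (n + 1) * q ^ (n * (n - 1) / 2) / (qPochFin q q n * qPochInf q q) := by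
    rw [hDval, one_div, mul_inv, mul_inv, inv_inv]
    rw [div_eq_mul_inv]
    rw [show ((-1 : ℂ) ^ (n + 1))⁻¹ = (-1 : ℂ) ^ (n + 1) by
      rw [← inv_pow]; norm_num]
  rw [← hval]
  refine hlim.congr' ?_
  have hev : ∀ᶠ y in 𝓝[≠] c, ‖q ^ m * y‖ ≤ 1 / 2 := by
    have hco : ContinuousAt (fun y : ℂ => ‖q ^ m * y‖) c :=
      ((continuous_const.mul continuous_id).norm).continuousAt
    have := hco.eventually_lt continuousAt_const hnorm_mc
    exact (this.mono fun y hy => hy.le).filter_mono nhdsWithin_le_nhds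
  filter_upwards [hev, self_mem_nhdsWithin] with y hy hyne
  exact (key y hyne hy).symm
end

section
/- Let q ∈ ℝ with 0 < q < 1, let L ≥ 1, k ∈ {1,…,L}, let x̃_k ∈ ℝ with x̃_k > 0, let x̃_d ∈ ℂ \ {0} for d ≠ k satisfy x̃_d/x̃_k ∉ { q^m : m ∈ ℤ }, and let σ_1,…,σ_L, η ∈ ℂ. Write q^w := exp(w · ln q) for w ∈ ℂ, y^{η−1} := exp((η−1) Log y) with the principal logarithm, and x̃_k^η := exp(η · ln x̃_k). Then for every n ∈ ℕ: lim_{y → q^{−n} x̃_k} (y − q^{−n} x̃_k) · y^{η−1} · ∏_{d=1}^L (q^{1−σ_d} y/x̃_d; q)_∞ / (y/x̃_d; q)_∞ = − x̃_k^η · [(q^{1−σ_k}; q)_∞ / (q; q)_∞] · ∏_{d≠k} (q^{1−σ_d} x̃_k/x̃_d; q)_∞ / (x̃_k/x̃_d; q)_∞ · ( q^{−η} ∏_{d=1}^L q^{1−σ_d} )^n · ∏_{d=1}^L (q^{σ_d} x̃_d/x̃_k; q)_n / (q x̃_d/x̃_k; q)_n. -/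
open Filter Topology

namespace QP

lemma norm_log_le {w : ℂ} (h : ‖w‖ ≤ 1/2) : ‖Complex.log (1 - w)‖ ≤ 2 * ‖w‖ := by
  have h1 : ‖-w‖ < 1 := by rw [norm_neg]; linarith
  have h0 := Complex.norm_log_one_add_le h1
  rw [norm_neg] at h0
  have hn : 0 ≤ ‖w‖ := norm_nonneg w
  have hinv : (1 - ‖w‖)⁻¹ ≤ 2 := by
    rw [inv_le_comm₀ (by linarith) (by norm_num)]; linarith
  have hinv0 : 0 ≤ (1 - ‖w‖)⁻¹ := inv_nonneg.mpr (by linarith)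
  have h2 : ‖w‖ ^ 2 * (1 - ‖w‖)⁻¹ ≤ ‖w‖ ^ 2 * 2 :=
    mul_le_mul_of_nonneg_left hinv (sq_nonneg _)
  have h3 : ‖w‖ ^ 2 ≤ ‖w‖ * (1/2) := by nlinarith
  have : ‖Complex.log (1 + -w)‖ ≤ ‖w‖ ^ 2 * (1 - ‖w‖)⁻¹ / 2 + ‖w‖ := h0
  rw [show (1 : ℂ) + -w = 1 - w by ring] at this
  nlinarith

lemma norm_factor_le {q : ℂ} (hq : ‖q‖ < 1) {x : ℂ} (hx : ‖x‖ ≤ 1/2) (j : ℕ) :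
    ‖q ^ j * x‖ ≤ (1/2) * ‖q‖ ^ j := by
  rw [norm_mul, norm_pow, mul_comm]
  have h2 : (0:ℝ) ≤ ‖q‖ ^ j := pow_nonneg (norm_nonneg q) j
  have := norm_nonneg x
  nlinarith

lemma summable_logs {q : ℂ} (hq : ‖q‖ < 1) {x : ℂ} (hx : ‖x‖ ≤ 1/2) :
    Summable (fun j : ℕ => Complex.log (1 - q ^ j * x)) := by
  apply Summable.of_norm_bounded (g := fun j : ℕ => ‖q‖ ^ j)
    (summable_geometric_of_lt_one (norm_nonneg q) hq)
  intro j
  have hb := norm_factor_le hq hx j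
  have hb2 : ‖q ^ j * x‖ ≤ 1/2 := by
    have : ‖q‖ ^ j ≤ 1 := pow_le_one₀ (norm_nonneg q) hq.le
    nlinarith
  calc ‖Complex.log (1 - q ^ j * x)‖ ≤ 2 * ‖q ^ j * x‖ := norm_log_le hb2
    _ ≤ ‖q‖ ^ j := by nlinarith

lemma factor_ne_zero {q : ℂ} (hq : ‖q‖ < 1) {x : ℂ} (hx : ‖x‖ ≤ 1/2) (j : ℕ) :
    (1 : ℂ) - q ^ j * x ≠ 0 := by
  intro h
  have : (1:ℂ) = q ^ j * x := by linear_combination h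
  have h2 : ‖q ^j * x‖ ≤ 1/2 := by
    have hb := norm_factor_le hq hx j
    have : ‖q‖ ^ j ≤ 1 := pow_le_one₀ (norm_nonneg q) hq.le
    nlinarith
  rw [← this] at h2
  norm_num at h2

lemma hasProd_tail {q : ℂ} (hq : ‖q‖ < 1) {x : ℂ} (hx : ‖x‖ ≤ 1/2) :
    HasProd (fun j : ℕ => 1 - q ^ j * x)
      (Complex.exp (∑' j : ℕ, Complex.log (1 - q ^ j * x))) := by
  have hs := (summable_logs hq hx).hasSum
  apply hs.cexp.congr
  intro _
  congr
  exact funext fun j => Complex.exp_log (factor_ne_zero hq hx j)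

lemma qPochInf_eq_exp {q : ℂ} (hq : ‖q‖ < 1) {x : ℂ} (hx : ‖x‖ ≤ 1/2) :
    qPochInf q x = Complex.exp (∑' j : ℕ, Complex.log (1 - q ^ j * x)) :=
  (hasProd_tail hq hx).tprod_eq

lemma qPochInf_ne_zero_of_small {q : ℂ} (hq : ‖q‖ < 1) {x : ℂ} (hx : ‖x‖ ≤ 1/2) :
    qPochInf q x ≠ 0 := by
  rw [qPochInf_eq_exp hq hx]; exact Complex.exp_ne_zero _

lemma exists_shift {q : ℂ} (hq : ‖q‖ < 1) (x : ℂ) :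
    ∃ N : ℕ, ∀ M, N ≤ M → ‖q ^ M * x‖ ≤ 1/2 := by
  have h2 : Tendsto (fun M : ℕ => ‖q ^ M * x‖) atTop (𝓝 0) := by
    have := ((tendsto_pow_atTop_nhds_zero_of_norm_lt_one hq).norm).mul_const ‖x‖
    simpa [norm_mul] using this
  have h3 := h2.eventually (eventually_le_nhds (by norm_num : (0:ℝ) < 1/2))
  exact eventually_atTop.mp h3

lemma multipliable_shift {q : ℂ} (hq : ‖q‖ < 1) (x : ℂ) (m : ℕ) :
    Multipliable (fun j : ℕ => 1 - q ^ (j + m) * x) := by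
  obtain ⟨N, hN⟩ := exists_shift hq x
  apply Multipliable.comp_nat_add (k := N)
  have he : (fun j : ℕ => 1 - q ^ (j + N + m) * x)
      = (fun j : ℕ => 1 - q ^ j * (q ^ (N + m) * x)) := by
    funext j; rw [show j + N + m = j + (N + m) by ring, pow_add]; ring
  rw [he]
  exact (hasProd_tail hq (hN (N + m) (Nat.le_add_right _ _))).multipliable

lemma qPochInf_split {q : ℂ} (hq : ‖q‖ < 1) (x : ℂ) (m : ℕ) :
    qPochInf q x = qPochFin q x m * qPochInf q (q ^ m * x) := by
  have h := Multipliable.prod_mul_tprod_nat_mul' (f := fun j : ℕ => 1 - q ^ j * x) (k := m)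
    (multipliable_shift hq x m)
  rw [qPochInf, ← h, qPochFin]
  congr 1
  rw [qPochInf]
  apply tprod_congr
  intro j
  rw [pow_add]; ring

end QP

namespace QP

lemma slit {w : ℂ} (h : ‖w‖ ≤ 1/2) : 1 - w ∈ Complex.slitPlane := by
  apply Complex.mem_slitPlane_iff.mpr
  left
  have : |w.re| ≤ ‖w‖ := Complex.abs_re_le_norm w
  have : w.re ≤ 1/2 := by
    have := abs_le.mp this; linarith
  simp only [Complex.sub_re, Complex.one_re]
  linarith

lemma norm_log_factor_le {q : ℂ} (hq : ‖q‖ < 1) {y : ℂ} (hy : ‖y‖ ≤ 1/2) (j : ℕ) :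
    ‖Complex.log (1 - q ^ j * y)‖ ≤ ‖q‖ ^ j := by
  have hb := norm_factor_le hq hy j
  have h1 : ‖q‖ ^ j ≤ 1 := pow_le_one₀ (norm_nonneg q) hq.le
  have hb2 : ‖q ^ j * y‖ ≤ 1/2 := by nlinarith
  calc ‖Complex.log (1 - q ^ j * y)‖ ≤ 2 * ‖q ^ j * y‖ := norm_log_le hb2
    _ ≤ ‖q‖ ^ j := by nlinarith

lemma norm_factor_le_half {q : ℂ} (hq : ‖q‖ < 1) {y : ℂ} (hy : ‖y‖ ≤ 1/2) (j : ℕ) :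
    ‖q ^ j * y‖ ≤ 1/2 := by
  have hb := norm_factor_le hq hy j
  have h1 : ‖q‖ ^ j ≤ 1 := pow_le_one₀ (norm_nonneg q) hq.le
  nlinarith

lemma continuous_qPochFin (q : ℂ) (n : ℕ) : Continuous (fun x => qPochFin q x n) := by
  unfold qPochFin
  apply continuous_finset_prod
  intro k _
  exact continuous_const.sub (continuous_const.mul continuous_id)

lemma continuous_qPochInf {q : ℂ} (hq : ‖q‖ < 1) : Continuous (qPochInf q) := by
  rw [continuous_iff_continuousAt]
  intro x₀
  set R : ℝ := ‖x₀‖ + 1 with hR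
  have hR0 : 0 < R := by positivity
  obtain ⟨N, hN⟩ := exists_shift hq (R : ℂ)
  have hNR : ‖q‖ ^ N * R ≤ 1/2 := by
    have := hN N le_rfl
    rwa [norm_mul, norm_pow, Complex.norm_real, Real.norm_of_nonneg hR0.le] at this
  set S := Metric.closedBall (0:ℂ) R with hS
  have hsmall : ∀ x ∈ S, ‖q ^ N * x‖ ≤ 1/2 := by
    intro x hx
    have hxR : ‖x‖ ≤ R := by simpa [hS, Metric.mem_closedBall] using hx
    have h2 : ‖q ^ N * x‖ ≤ ‖q‖ ^ N * R := by
      rw [norm_mul, norm_pow]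
      gcongr
    exact le_trans h2 hNR
  have key : ∀ x ∈ S, qPochInf q x =
      qPochFin q x N * Complex.exp (∑' j : ℕ, Complex.log (1 - q ^ j * (q ^ N * x))) := by
    intro x hx
    rw [qPochInf_split hq x N, qPochInf_eq_exp hq (hsmall x hx)]
  have hcont : ContinuousOn (fun x => qPochFin q x N *
      Complex.exp (∑' j : ℕ, Complex.log (1 - q ^ j * (q ^ N * x)))) S := by
    apply ContinuousOn.mul ((continuous_qPochFin q N).continuousOn)
    apply ContinuousOn.cexp
    apply continuousOn_tsum (u := fun j : ℕ => ‖q‖ ^ j)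
    · intro j
      apply ContinuousOn.clog
      · exact (continuous_const.sub (continuous_const.mul
          (continuous_const.mul continuous_id))).continuousOn
      · intro x hx
        exact slit (norm_factor_le_half hq (hsmall x hx) j)
    · exact summable_geometric_of_lt_one (norm_nonneg q) hq
    · intro j x hx
      exact norm_log_factor_le hq (hsmall x hx) j
  have hco : ContinuousOn (qPochInf q) S := hcont.congr key
  apply hco.continuousAt
  apply mem_nhds_iff.mpr
  exact ⟨Metric.ball 0 R, Metric.ball_subset_closedBall, Metric.isOpen_ball,
    by simpa [Metric.mem_ball] using (by linarith : ‖x₀‖ < R)⟩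

lemma qPochInf_ne_zero {q : ℂ} (hq : ‖q‖ < 1) {x : ℂ} (h : ∀ j : ℕ, q ^ j * x ≠ 1) :
    qPochInf q x ≠ 0 := by
  obtain ⟨N, hN⟩ := exists_shift hq x
  rw [qPochInf_split hq x N]
  apply mul_ne_zero
  · rw [qPochFin]
    apply Finset.prod_ne_zero_iff.mpr
    intro j _
    exact sub_ne_zero.mpr (h j).symm
  · exact qPochInf_ne_zero_of_small hq (hN N le_rfl)

end QP

namespace QP
variable {Q : ℂ}

lemma splitdown (hq : ‖Q‖ < 1) (hQ0 : Q ≠ 0) (n : ℕ) (a : ℂ) :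
    qPochInf Q (Q ^ (-(n:ℤ)) * a) = qPochFin Q (Q ^ (-(n:ℤ)) * a) n * qPochInf Q a := by
  have h := qPochInf_split hq (Q ^ (-(n:ℤ)) * a) n
  rw [h]
  congr 2
  rw [← mul_assoc, ← zpow_natCast Q n, ← zpow_add₀ hQ0]
  simp

lemma finrefl (hQ0 : Q ≠ 0) (n : ℕ) {a : ℂ} (ha : a ≠ 0) :
    qPochFin Q (Q ^ (-(n:ℤ)) * a) n
      = (∏ j ∈ Finset.range n, -(Q ^ j * Q ^ (-(n:ℤ)) * a)) * qPochFin Q (Q * a⁻¹) n := by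
  have hrefl : qPochFin Q (Q * a⁻¹) n = ∏ j ∈ Finset.range n, (1 - Q ^ (n - j) * a⁻¹) := by
    rw [qPochFin, ← Finset.prod_range_reflect]
    apply Finset.prod_congr rfl
    intro j hj
    have hj' : j < n := Finset.mem_range.mp hj
    have : n - 1 - j + 1 = n - j := by omega
    rw [← this, pow_succ]
    ring
  rw [hrefl, ← Finset.prod_mul_distrib, qPochFin]
  apply Finset.prod_congr rfl
  intro j hj
  have hj' : j < n := Finset.mem_range.mp hj
  have hpow : Q ^ j * Q ^ (n - j) = Q ^ n := by
    rw [← pow_add]; congr 1; omega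
  have hun : Q ^ n * Q ^ (-(n:ℤ)) = 1 := by
    rw [← zpow_natCast Q n, ← zpow_add₀ hQ0]; simp
  have expand : -(Q ^ j * Q ^ (-(n:ℤ)) * a) * (1 - Q ^ (n - j) * a⁻¹)
      = -(Q ^ j * Q ^ (-(n:ℤ)) * a) + Q ^ j * Q ^ (n-j) * Q ^ (-(n:ℤ)) * (a * a⁻¹) := by ring
  rw [expand, hpow, hun, mul_inv_cancel₀ ha]
  ring


lemma cpow_pow {x : ℂ} (hx : x ≠ 0) (w : ℂ) (n : ℕ) : (x ^ w) ^ n = x ^ ((n:ℂ) * w) := by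
  induction n with
  | zero => simp
  | succ m ih =>
    rw [pow_succ, ih, ← Complex.cpow_add _ _ hx]
    congr 1
    push_cast; ring

end QP

open QP

/-- The residue of the `W_{q,t}(A₁)` magnetic block integrand at the pole `y = q^{-n} x̃_k`. -/
theorem stmt5 (q : ℝ) (hq0 : 0 < q) (hq1 : q < 1) (L : ℕ) (hL : 1 ≤ L) (k : Fin L)
    (xk : ℝ) (hxk : 0 < xk) (xt : Fin L → ℂ) (hxtk : xt k = (xk : ℂ))
    (hx0 : ∀ d, d ≠ k → xt d ≠ 0)
    (hgen : ∀ d, d ≠ k → ∀ m : ℤ, xt d / xt k ≠ (q : ℂ) ^ m)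
    (σ : Fin L → ℂ) (η : ℂ) (n : ℕ) :
    Tendsto
      (fun y : ℂ => (y - (q : ℂ) ^ (-(n : ℤ)) * xt k) * y ^ (η - 1) *
        ∏ d, qPochInf (q : ℂ) ((q : ℂ) ^ (1 - σ d) * y / xt d) / qPochInf (q : ℂ) (y / xt d))
      (𝓝[≠] ((q : ℂ) ^ (-(n : ℤ)) * xt k))
      (𝓝 (-(xt k ^ η *
        (qPochInf (q : ℂ) ((q : ℂ) ^ (1 - σ k)) / qPochInf (q : ℂ) (q : ℂ)) *
        (∏ d ∈ Finset.univ.erase k,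
          qPochInf (q : ℂ) ((q : ℂ) ^ (1 - σ d) * xt k / xt d) /
            qPochInf (q : ℂ) (xt k / xt d)) *
        ((q : ℂ) ^ (-η) * ∏ d, (q : ℂ) ^ (1 - σ d)) ^ n *
        ∏ d, qPochFin (q : ℂ) ((q : ℂ) ^ σ d * xt d / xt k) n /
          qPochFin (q : ℂ) ((q : ℂ) * xt d / xt k) n))) := by
  have hQ : ‖(q:ℂ)‖ < 1 := by
    rw [Complex.norm_real, Real.norm_eq_abs, abs_of_pos hq0]; exact hq1
  have hQ0 : (q:ℂ) ≠ 0 := by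
    simpa using hq0.ne'
  have hxk0 : xt k ≠ 0 := by
    rw [hxtk]; exact_mod_cast hxk.ne'
  have hxd0 : ∀ d, xt d ≠ 0 := by
    intro d
    by_cases hd : d = k
    · rw [hd]; exact hxk0
    · exact hx0 d hd
  set Q : ℂ := (q:ℂ) with hQdef
  set u : ℂ := Q ^ (-(n:ℤ)) with hudef
  have hu0 : u ≠ 0 := zpow_ne_zero _ hQ0
  have hu : Q ^ n * u = 1 := by
    rw [hudef, ← zpow_natCast Q n, ← zpow_add₀ hQ0]; simp
  set p : ℂ := u * xt k with hpdef
  have hp0 : p ≠ 0 := mul_ne_zero hu0 hxk0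
  set G : ℂ → ℂ := fun y =>
    (-(xt k) * u * qPochInf Q (Q ^ (1 - σ k) * y / xt k) /
      (qPochFin Q (y / xt k) n * qPochInf Q (Q ^ (n+1) * (y / xt k)))) * y ^ (η - 1) *
    ∏ d ∈ Finset.univ.erase k,
      qPochInf Q (Q ^ (1 - σ d) * y / xt d) / qPochInf Q (y / xt d) with hGdef
  have heq : ∀ y : ℂ, y ≠ p →
      (y - p) * y ^ (η - 1) *
        ∏ d, qPochInf Q (Q ^ (1 - σ d) * y / xt d) / qPochInf Q (y / xt d) = G y := by
    intro y hy
    set t : ℂ := 1 - Q ^ n * (y / xt k) with htdef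
    have ht : t ≠ 0 := by
      intro h
      apply hy
      have h1 : (1:ℂ) = Q ^ n * (y / xt k) := sub_eq_zero.mp h
      have key : u * (Q ^ n * (y / xt k)) * xt k = y := by
        field_simp
        linear_combination y * hu
      calc y = u * (Q ^ n * (y / xt k)) * xt k := key.symm
        _ = u * 1 * xt k := by rw [← h1]
        _ = p := by rw [hpdef]; ring
    set Nk : ℂ := qPochInf Q (Q ^ (1 - σ k) * y / xt k) with hNk
    set A : ℂ := qPochFin Q (y / xt k) n with hA
    set B : ℂ := qPochInf Q (Q ^ (n+1) * (y / xt k)) with hB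
    have hDk : qPochInf Q (y / xt k) = A * t * B := by
      rw [qPochInf_split hQ (y / xt k) (n+1)]
      congr 1
      rw [qPochFin, Finset.prod_range_succ, ← qPochFin, ← hA, htdef]
    have hyp : y - p = -(xt k) * u * t := by
      rw [hpdef, htdef]
      have hX : xt k * u * (Q ^ n * (y / xt k)) = y := by
        rw [show xt k * u * (Q ^ n * (y / xt k)) = (Q ^ n * u) * y * (xt k / xt k) by ring,
          div_self hxk0, hu]
        ring
      linear_combination -hX
    rw [← Finset.mul_prod_erase Finset.univ _ (Finset.mem_univ k)]
    have hc : t * (Nk / (A * t * B)) = Nk / (A * B) := by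
      rw [mul_div_assoc', show A * t * B = t * (A * B) by ring]
      exact mul_div_mul_left Nk (A * B) ht
    calc (y - p) * y ^ (η - 1) *
        ((Nk / qPochInf Q (y / xt k)) *
          ∏ d ∈ Finset.univ.erase k,
            qPochInf Q (Q ^ (1 - σ d) * y / xt d) / qPochInf Q (y / xt d))
        = (-(xt k) * u) * (t * (Nk / (A * t * B))) * (y ^ (η - 1) *
          ∏ d ∈ Finset.univ.erase k,
            qPochInf Q (Q ^ (1 - σ d) * y / xt d) / qPochInf Q (y / xt d)) := by
          rw [hyp, hDk]; ring
      _ = (-(xt k) * u) * (Nk / (A * B)) * (y ^ (η - 1) *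
          ∏ d ∈ Finset.univ.erase k,
            qPochInf Q (Q ^ (1 - σ d) * y / xt d) / qPochInf Q (y / xt d)) := by
          rw [hc]
      _ = G y := by rw [hGdef]; ring
  have hpu : p / xt k = u := by rw [hpdef]; field_simp
  have hpreal : p = ((q ^ (-(n:ℤ)) * xk : ℝ) : ℂ) := by
    rw [hpdef, hudef, hxtk, hQdef]
    push_cast [Complex.ofReal_zpow]
    ring
  have hfinne : qPochFin Q (p / xt k) n ≠ 0 := by
    rw [hpu, qPochFin]
    apply Finset.prod_ne_zero_iff.mpr
    intro j hj
    have hj' : j < n := Finset.mem_range.mp hj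
    have hlt : q ^ n < q ^ j := pow_lt_pow_right_of_lt_one₀ hq0 hq1 hj'
    have hgt : (1:ℝ) < q ^ j / q ^ n := (one_lt_div (pow_pos hq0 n)).mpr hlt
    have hQu : Q ^ j * u = ((q ^ j / q ^ n : ℝ) : ℂ) := by
      rw [hudef, zpow_neg, zpow_natCast, hQdef]
      push_cast
      ring
    rw [hQu]
    apply sub_ne_zero.mpr
    exact_mod_cast hgt.ne
  have hBQ : Q ^ (n+1) * (p / xt k) = Q := by
    rw [hpu, pow_succ]
    linear_combination Q * hu
  have hBne : qPochInf Q (Q ^ (n+1) * (p / xt k)) ≠ 0 := by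
    rw [hBQ]
    apply qPochInf_ne_zero hQ
    intro j
    have h1 : (q:ℝ) ^ (j+1) < 1 := pow_lt_one₀ hq0.le hq1 (Nat.succ_ne_zero j)
    have hQQ : Q ^ j * Q = ((q ^ (j+1) : ℝ) : ℂ) := by
      rw [hQdef]; push_cast [pow_succ]; ring
    rw [hQQ]
    exact_mod_cast h1.ne
  have hdenne : ∀ d, d ≠ k → qPochInf Q (p / xt d) ≠ 0 := by
    intro d hd
    apply qPochInf_ne_zero hQ
    intro j hcon
    apply hgen d hd ((j:ℤ) - n)
    have h1 : Q ^ j * p = xt d := by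
      field_simp [hxd0 d] at hcon
      linear_combination hcon
    rw [← h1, hpdef, zpow_sub₀ hQ0, zpow_natCast, hudef, zpow_neg, zpow_natCast]
    field_simp
  have hcont : ContinuousAt G p := by
    rw [hGdef]
    apply ContinuousAt.mul
    apply ContinuousAt.mul
    · apply ContinuousAt.div
      · exact (continuous_const.mul ((continuous_qPochInf hQ).comp
          ((continuous_const.mul continuous_id).div_const (xt k)))).continuousAt
      · exact (((continuous_qPochFin Q n).comp (continuous_id.div_const (xt k))).mul
          ((continuous_qPochInf hQ).comp
            ((continuous_const.mul (continuous_id.div_const (xt k)))))).continuousAt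
      · exact mul_ne_zero hfinne hBne
    · apply continuousAt_cpow_const
      rw [hpreal]
      apply Complex.ofReal_mem_slitPlane.2
      positivity
    · apply tendsto_finset_prod
      intro d hd
      apply ContinuousAt.div
      · exact ((continuous_qPochInf hQ).comp
          ((continuous_const.mul continuous_id).div_const (xt d))).continuousAt
      · exact ((continuous_qPochInf hQ).comp (continuous_id.div_const (xt d))).continuousAt
      · exact hdenne d (Finset.ne_of_mem_erase hd)
  have hcp0 : ∀ w : ℂ, Q ^ w ≠ 0 := fun w => by
    rw [Complex.cpow_def_of_ne_zero hQ0]; exact Complex.exp_ne_zero _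
  have hArg : ∀ d : Fin L, Q ^ (1 - σ d) * p / xt d = u * (Q ^ (1 - σ d) * xt k / xt d) := by
    intro d; rw [hpdef]; ring
  have hBrg : ∀ d : Fin L, p / xt d = u * (xt k / xt d) := by
    intro d; rw [hpdef]; ring
  have hσ : ∀ d, Q ^ σ d * Q ^ (1 - σ d) = Q := by
    intro d
    rw [← Complex.cpow_add _ _ hQ0, show σ d + (1 - σ d) = 1 by ring, Complex.cpow_one]
  have hnum : ∀ d : Fin L, qPochInf Q (u * (Q ^ (1 - σ d) * xt k / xt d)) =
      ((Q ^ (1 - σ d)) ^ n * ∏ j ∈ Finset.range n, -(Q ^ j * u * (xt k / xt d))) *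
        (qPochFin Q (Q ^ σ d * xt d / xt k) n * qPochInf Q (Q ^ (1 - σ d) * xt k / xt d)) := by
    intro d
    have ha : Q ^ (1 - σ d) * xt k / xt d ≠ 0 :=
      div_ne_zero (mul_ne_zero (hcp0 _) hxk0) (hxd0 d)
    have h2 : Q * (Q ^ (1 - σ d) * xt k / xt d)⁻¹ = Q ^ σ d * xt d / xt k := by
      field_simp [hxk0, hxd0 d, hcp0 (1 - σ d)]
      linear_combination -hσ d
    have h3 : (∏ j ∈ Finset.range n, -(Q ^ j * Q ^ (-(n:ℤ)) * (Q ^ (1 - σ d) * xt k / xt d)))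
        = (Q ^ (1 - σ d)) ^ n *
          ∏ j ∈ Finset.range n, -(Q ^ j * Q ^ (-(n:ℤ)) * (xt k / xt d)) := by
      rw [Finset.prod_congr rfl (fun j _ =>
        show -(Q ^ j * Q ^ (-(n:ℤ)) * (Q ^ (1 - σ d) * xt k / xt d))
          = Q ^ (1 - σ d) * -(Q ^ j * Q ^ (-(n:ℤ)) * (xt k / xt d)) from by ring),
        Finset.prod_mul_distrib, Finset.prod_const, Finset.card_range]
    rw [hudef, splitdown hQ hQ0 n _, finrefl hQ0 n ha, h2, h3]
    ring
  have hden : ∀ d : Fin L, qPochFin Q (u * (xt k / xt d)) n =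
      (∏ j ∈ Finset.range n, -(Q ^ j * u * (xt k / xt d))) * qPochFin Q (Q * xt d / xt k) n := by
    intro d
    have hb : xt k / xt d ≠ 0 := div_ne_zero hxk0 (hxd0 d)
    rw [hudef, finrefl hQ0 n hb, inv_div, ← mul_div_assoc]
  have hdeninf : ∀ d : Fin L, qPochInf Q (u * (xt k / xt d)) =
      qPochFin Q (u * (xt k / xt d)) n * qPochInf Q (xt k / xt d) := by
    intro d
    rw [hudef]
    exact splitdown hQ hQ0 n _
  have hCdne : ∀ d : Fin L, (∏ j ∈ Finset.range n, -(Q ^ j * u * (xt k / xt d))) ≠ 0 := by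
    intro d
    apply Finset.prod_ne_zero_iff.mpr
    intro j _
    apply neg_ne_zero.mpr
    exact mul_ne_zero (mul_ne_zero (pow_ne_zero _ hQ0) hu0) (div_ne_zero hxk0 (hxd0 d))
  have hFdne : ∀ d : Fin L, qPochFin Q (Q * xt d / xt k) n ≠ 0 := by
    intro d
    rw [qPochFin]
    apply Finset.prod_ne_zero_iff.mpr
    intro j _ hzero
    have hz : Q ^ j * (Q * xt d / xt k) = 1 := by linear_combination -hzero
    by_cases hd : d = k
    · subst hd
      have hz2 : Q ^ (j+1) = 1 := by
        field_simp [hxk0] at hz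
        linear_combination hz
      have hr : (q:ℝ) ^ (j+1) < 1 := pow_lt_one₀ hq0.le hq1 (Nat.succ_ne_zero j)
      have hc : ((q ^ (j+1) : ℝ) : ℂ) = 1 := by
        rw [hQdef] at hz2
        push_cast
        exact hz2
      exact hr.ne (by exact_mod_cast hc)
    · have hz2 : xt d * Q ^ (j+1) = xt k := by
        field_simp [hxk0] at hz
        linear_combination hz
      apply hgen d hd (-((j:ℤ)+1))
      rw [show (-((j:ℤ)+1)) = -((j+1 : ℕ) : ℤ) by push_cast; ring, zpow_neg, zpow_natCast]
      field_simp
      linear_combination hz2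
  have hIBne : ∀ d, d ≠ k → qPochInf Q (xt k / xt d) ≠ 0 := by
    intro d hd
    apply qPochInf_ne_zero hQ
    intro j hcon
    apply hgen d hd (j:ℤ)
    rw [zpow_natCast]
    field_simp [hxd0 d] at hcon
    field_simp [hxk0]
    linear_combination -hcon
  have hQQne : qPochInf Q Q ≠ 0 := by
    have h := hBne
    rw [hBQ] at h
    exact h
  have hureal : u = ((q ^ (-(n:ℤ)) : ℝ) : ℂ) := by
    rw [hudef, hQdef, Complex.ofReal_zpow]
  have hupos : (0:ℝ) < q ^ (-(n:ℤ)) := zpow_pos hq0 _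
  have hlq : Complex.log Q = ((Real.log q : ℝ) : ℂ) := by
    rw [hQdef, ← Complex.ofReal_log hq0.le]
  have hlx : Complex.log (xt k) = ((Real.log xk : ℝ) : ℂ) := by
    rw [hxtk, ← Complex.ofReal_log hxk.le]
  have hlu : Complex.log u = -(n:ℂ) * ((Real.log q : ℝ) : ℂ) := by
    rw [hureal, ← Complex.ofReal_log hupos.le, Real.log_zpow]
    push_cast
    ring
  have hlp : Complex.log p = -(n:ℂ) * ((Real.log q : ℝ) : ℂ) + ((Real.log xk : ℝ) : ℂ) := by
    rw [hpdef, hureal, hxtk, ← Complex.ofReal_mul,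
      ← Complex.ofReal_log (by positivity : (0:ℝ) ≤ q ^ (-(n:ℤ)) * xk),
      Real.log_mul (ne_of_gt hupos) hxk.ne', Real.log_zpow]
    push_cast
    ring
  have hexp : ∀ A B C D E : ℂ, A + B + C = D + E →
      Complex.exp A * -Complex.exp B * Complex.exp C
        = -(Complex.exp D * Complex.exp E) := by
    intro A B C D E h
    have h2 : Complex.exp A * Complex.exp B * Complex.exp C
        = Complex.exp D * Complex.exp E := by
      rw [← Complex.exp_add, ← Complex.exp_add, h, Complex.exp_add]
    linear_combination -h2
  have hscal : p ^ (η - 1) * -(xt k) * u = -(xt k ^ η * (Q ^ (-η)) ^ n) := by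
    rw [cpow_pow hQ0 (-η) n, Complex.cpow_def_of_ne_zero hp0,
      Complex.cpow_def_of_ne_zero hxk0, Complex.cpow_def_of_ne_zero hQ0,
      hlp, hlx, hlq]
    rw [show xt k = Complex.exp (((Real.log xk : ℝ) : ℂ)) from by
      rw [← hlx]; exact (Complex.exp_log hxk0).symm]
    rw [show u = Complex.exp (-(n:ℂ) * ((Real.log q : ℝ) : ℂ)) from by
      rw [← hlu]; exact (Complex.exp_log hu0).symm]
    apply hexp
    push_cast
    ring
  have herase : ∀ d ∈ Finset.univ.erase k,
      qPochInf Q (Q ^ (1 - σ d) * p / xt d) / qPochInf Q (p / xt d)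
      = (Q ^ (1 - σ d)) ^ n *
          (qPochFin Q (Q ^ σ d * xt d / xt k) n / qPochFin Q (Q * xt d / xt k) n) *
          (qPochInf Q (Q ^ (1 - σ d) * xt k / xt d) / qPochInf Q (xt k / xt d)) := by
    intro d hd'
    have hd := Finset.ne_of_mem_erase hd'
    rw [hArg d, hBrg d, hnum d, hdeninf d, hden d]
    have hF2 := hFdne d
    have hI2 := hIBne d hd
    set F2 := qPochFin Q (Q * xt d / xt k) n
    set I2 := qPochInf Q (xt k / xt d)
    have hC := hCdne d
    set C := ∏ j ∈ Finset.range n, -(Q ^ j * u * (xt k / xt d))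
    field_simp
  have hval : G p = -(xt k ^ η *
        (qPochInf Q (Q ^ (1 - σ k)) / qPochInf Q Q) *
        (∏ d ∈ Finset.univ.erase k,
          qPochInf Q (Q ^ (1 - σ d) * xt k / xt d) / qPochInf Q (xt k / xt d)) *
        ((Q ^ (-η) * ∏ d, Q ^ (1 - σ d)) ^ n) *
        ∏ d, qPochFin Q (Q ^ σ d * xt d / xt k) n / qPochFin Q (Q * xt d / xt k) n) := by
    simp only [hGdef]
    rw [Finset.prod_congr rfl herase, hBQ, hBrg k, hden k, hArg k, hnum k]
    rw [Finset.prod_mul_distrib, Finset.prod_mul_distrib, mul_pow, ← Finset.prod_pow]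
    rw [← Finset.mul_prod_erase Finset.univ (fun d => (Q ^ (1 - σ d)) ^ n)
      (Finset.mem_univ k)]
    rw [← Finset.mul_prod_erase Finset.univ
      (fun d => qPochFin Q (Q ^ σ d * xt d / xt k) n / qPochFin Q (Q * xt d / xt k) n)
      (Finset.mem_univ k)]
    rw [show Q ^ (1 - σ k) * xt k / xt k = Q ^ (1 - σ k) from by
      rw [mul_div_assoc, div_self hxk0, mul_one]]
    set IAk := qPochInf Q (Q ^ (1 - σ k)) with hIAk
    set Fnk := qPochFin Q (Q ^ σ k * xt k / xt k) n with hFnk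
    set Fdk := qPochFin Q (Q * xt k / xt k) n with hFdk
    set Cdk := ∏ j ∈ Finset.range n, -(Q ^ j * u * (xt k / xt k)) with hCdk
    set QQ := qPochInf Q Q with hQQ
    set Pa := ∏ d ∈ Finset.univ.erase k, (Q ^ (1 - σ d)) ^ n with hPa
    set Pb := ∏ d ∈ Finset.univ.erase k,
      qPochFin Q (Q ^ σ d * xt d / xt k) n / qPochFin Q (Q * xt d / xt k) n with hPb
    set Pc := ∏ d ∈ Finset.univ.erase k,
      qPochInf Q (Q ^ (1 - σ d) * xt k / xt d) / qPochInf Q (xt k / xt d) with hPc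
    have hCdkne : Cdk ≠ 0 := hCdne k
    have hFdkne : Fdk ≠ 0 := hFdne k
    field_simp [hCdkne, hFdkne, hQQne]
    linear_combination ((Q ^ (1 - σ k)) ^ n * Fnk * Pa * Pb * Pc * IAk) * hscal
  have htend : Tendsto G (𝓝[≠] p) (𝓝 (G p)) := hcont.continuousWithinAt.tendsto
  rw [hval] at htend
  refine Tendsto.congr' ?_ htend
  filter_upwards [self_mem_nhdsWithin] with y hy
  exact (heq y hy).symm
end

section
/- Let q ∈ ℂ with 0 < |q| < 1, let L ≥ 1 and k ∈ {1,…,L}. Let w_1,…,w_L ∈ ℂ \ {0} with w_k = 1 and w_d ∉ { q^m : m ∈ ℤ } for every d ≠ k, and let p_1,…,p_L ∈ ℂ \ {0} with p_d w_d ∉ { q^{−j} : j ∈ ℕ } for every d. Then for every ζ ∈ ℂ with |ζ| < 1 both series below converge absolutely and [ (q/p_k; q)_∞ / (q; q)_∞ ] · ∏_{d≠k} (q/(p_d w_d); q)_∞ / (1/w_d; q)_∞ · ∑_{m=0}^∞ ζ^m ∏_{d=1}^L (p_d w_d; q)_m / (q w_d; q)_m = [ Θ_q(p_k) / (q; q)_∞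 ] · ∏_{d≠k} Θ_q(p_d w_d) / Θ_q(1/w_d) · (q; q)_∞^{−1} ∑_{m=0}^∞ ζ^m ∏_{d=1}^L (q^{1+m} w_d; q)_∞ / (q^m p_d w_d; q)_∞. -/
/-- The theta function `Θ_q(x) = (x; q)_∞ (q/x; q)_∞`. -/
noncomputable def thetaQ (q x : ℂ) : ℂ := qPochInf q x * qPochInf q (q / x)

section QPochAux
open Complex Filter Finset

lemma aux_summable_log {q : ℂ} (hq1 : ‖q‖ < 1) (x : ℂ) :
    Summable fun j : ℕ => Complex.log (1 - q ^ j * x) := by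
  obtain ⟨N, hN⟩ : ∃ N : ℕ, ∀ j ≥ N, ‖q ^ j * x‖ ≤ 1 / 2 := by
    have h : Tendsto (fun j : ℕ => q ^ j * x) atTop (nhds 0) := by
      simpa using (tendsto_pow_atTop_nhds_zero_of_norm_lt_one hq1).mul_const x
    have h2 : Tendsto (fun j : ℕ => ‖q ^ j * x‖) atTop (nhds 0) := by
      simpa using h.norm
    have := h2.eventually_le_const (by norm_num : (0:ℝ) < 1/2)
    exact eventually_atTop.mp this
  rw [← summable_nat_add_iff N]
  apply Summable.of_norm_bounded (g := fun j => 3 / 2 * ‖q ^ N * x‖ * ‖q‖ ^ j)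
    (((summable_geometric_of_lt_one (norm_nonneg q) hq1).mul_left _))
  intro j
  have hsmall : ‖-(q ^ (j + N) * x)‖ ≤ 1 / 2 := by
    rw [norm_neg]; exact hN _ (Nat.le_add_left N j)
  have hrw : (1 : ℂ) - q ^ (j + N) * x = 1 + -(q ^ (j + N) * x) := by ring
  rw [hrw]
  calc ‖Complex.log (1 + -(q ^ (j + N) * x))‖
      ≤ 3 / 2 * ‖-(q ^ (j + N) * x)‖ := Complex.norm_log_one_add_half_le_self hsmall
    _ = 3 / 2 * ‖q ^ N * x‖ * ‖q‖ ^ j := by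
        rw [norm_neg, pow_add, mul_assoc, norm_mul, norm_mul, norm_pow, norm_pow]; ring

lemma aux_multipliable {q : ℂ} (hq1 : ‖q‖ < 1) (x : ℂ)
    (hx : ∀ j : ℕ, 1 - q ^ j * x ≠ 0) :
    Multipliable fun j : ℕ => 1 - q ^ j * x :=
  Complex.multipliable_of_summable_log (aux_summable_log hq1 x)

lemma qPochInf_ne_zero {q : ℂ} (hq1 : ‖q‖ < 1) (x : ℂ)
    (hx : ∀ j : ℕ, 1 - q ^ j * x ≠ 0) : qPochInf q x ≠ 0 := by
  have h2 := Complex.cexp_tsum_eq_tprod (f := fun j => 1 - q ^ j * x)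
    hx (aux_summable_log hq1 x)
  rw [qPochInf, ← h2]
  exact Complex.exp_ne_zero _

lemma qPochFin_ne_zero {q : ℂ} (x : ℂ) (hx : ∀ j : ℕ, 1 - q ^ j * x ≠ 0) (m : ℕ) :
    qPochFin q x m ≠ 0 :=
  Finset.prod_ne_zero_iff.mpr fun j _ => hx j

lemma qPochInf_eq_exp {q : ℂ} (hq1 : ‖q‖ < 1) (x : ℂ)
    (hx : ∀ j : ℕ, 1 - q ^ j * x ≠ 0) :
    qPochInf q x = Complex.exp (∑' j : ℕ, Complex.log (1 - q ^ j * x)) := by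
  have h := Complex.cexp_tsum_eq_tprod (f := fun j => 1 - q ^ j * x)
    hx (aux_summable_log hq1 x)
  exact h.symm

lemma qPochInf_split {q : ℂ} (hq1 : ‖q‖ < 1) (x : ℂ)
    (hx : ∀ j : ℕ, 1 - q ^ j * x ≠ 0) (m : ℕ) :
    qPochInf q x = qPochFin q x m * qPochInf q (q ^ m * x) := by
  have hx' : ∀ j : ℕ, 1 - q ^ j * (q ^ m * x) ≠ 0 := fun j => by
    rw [← mul_assoc, ← pow_add]; exact hx (j + m)
  rw [qPochInf_eq_exp hq1 x hx, qPochInf_eq_exp hq1 _ hx']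
  rw [← (aux_summable_log hq1 x).sum_add_tsum_nat_add m, Complex.exp_add]
  congr 1
  · rw [Complex.exp_sum, qPochFin]
    exact Finset.prod_congr rfl fun j _ => Complex.exp_log (hx j)
  · congr 1
    exact tsum_congr fun i => by rw [← mul_assoc, ← pow_add]

lemma qPochFin_tendsto {q : ℂ} (hq1 : ‖q‖ < 1) (x : ℂ)
    (hx : ∀ j : ℕ, 1 - q ^ j * x ≠ 0) :
    Tendsto (fun m => qPochFin q x m) atTop (nhds (qPochInf q x)) :=
  (aux_multipliable hq1 x hx).hasProd.tendsto_prod_nat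

lemma key_ratio {q : ℂ} (hq1 : ‖q‖ < 1) (a b : ℂ)
    (ha : ∀ j : ℕ, 1 - q ^ j * a ≠ 0) (hb : ∀ j : ℕ, 1 - q ^ j * b ≠ 0) (m : ℕ) :
    qPochFin q a m / qPochFin q b m =
      (qPochInf q a / qPochInf q b) * (qPochInf q (q ^ m * b) / qPochInf q (q ^ m * a)) := by
  have ha' : ∀ j : ℕ, 1 - q ^ j * (q ^ m * a) ≠ 0 := fun j => by
    rw [← mul_assoc, ← pow_add]; exact ha (j + m)
  have hb' : ∀ j : ℕ, 1 - q ^ j * (q ^ m * b) ≠ 0 := fun j => by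
    rw [← mul_assoc, ← pow_add]; exact hb (j + m)
  have h1 : qPochInf q (q ^ m * a) ≠ 0 := qPochInf_ne_zero hq1 _ ha'
  have h2 : qPochInf q (q ^ m * b) ≠ 0 := qPochInf_ne_zero hq1 _ hb'
  have h3 : qPochFin q b m ≠ 0 := qPochFin_ne_zero b hb m
  rw [qPochInf_split hq1 a ha m, qPochInf_split hq1 b hb m]
  field_simp

/-- Equality of the `W_{q,t}(A₁)` vertex-function component with the exceptional-Dirichlet
half-index (sum over boundary monopole fluxes). -/
theorem stmt7 (q : ℂ) (hq0 : 0 < ‖q‖) (hq1 : ‖q‖ < 1) (L : ℕ) (hL : 1 ≤ L) (k : Fin L)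
    (w p : Fin L → ℂ) (hw0 : ∀ d, w d ≠ 0) (hwk : w k = 1)
    (hwgen : ∀ d, d ≠ k → ∀ m : ℤ, w d ≠ q ^ m)
    (hp0 : ∀ d, p d ≠ 0) (hpw : ∀ d, ∀ j : ℕ, p d * w d ≠ q ^ (-(j : ℤ)))
    (ζ : ℂ) (hζ : ‖ζ‖ < 1) :
    Summable (fun m : ℕ =>
      ‖ζ ^ m * ∏ d, qPochFin q (p d * w d) m / qPochFin q (q * w d) m‖) ∧
    Summable (fun m : ℕ =>
      ‖ζ ^ m * ∏ d, qPochInf q (q ^ (1 + m) * w d) / qPochInf q (q ^ m * (p d * w d))‖) ∧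
    (qPochInf q (q / p k) / qPochInf q q) *
        (∏ d ∈ Finset.univ.erase k, qPochInf q (q / (p d * w d)) / qPochInf q (1 / w d)) *
        (∑' m : ℕ, ζ ^ m * ∏ d, qPochFin q (p d * w d) m / qPochFin q (q * w d) m) =
      (thetaQ q (p k) / qPochInf q q) *
        (∏ d ∈ Finset.univ.erase k, thetaQ q (p d * w d) / thetaQ q (1 / w d)) *
        ((qPochInf q q)⁻¹ *
          (∑' m : ℕ, ζ ^ m *
            ∏ d, qPochInf q (q ^ (1 + m) * w d) / qPochInf q (q ^ m * (p d * w d)))) := by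
  have hqpow : ∀ n : ℕ, q ^ (n + 1) ≠ 1 := by
    intro n h
    have h2 : ‖q ^ (n + 1)‖ < 1 := by
      rw [norm_pow]; exact pow_lt_one₀ (norm_nonneg q) hq1 n.succ_ne_zero
    rw [h, norm_one] at h2; exact lt_irrefl 1 h2
  have haq : ∀ d, ∀ j : ℕ, 1 - q ^ j * (p d * w d) ≠ 0 := by
    intro d j h
    apply hpw d j
    rw [zpow_neg, zpow_natCast]
    exact eq_inv_of_mul_eq_one_left (by linear_combination -h)
  have hbq : ∀ d, ∀ j : ℕ, 1 - q ^ j * (q * w d) ≠ 0 := by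
    intro d j h
    have h1 : w d * q ^ (j + 1) = 1 := by linear_combination -h
    by_cases hd : d = k
    · subst hd; rw [hwk, one_mul] at h1; exact hqpow j h1
    · apply hwgen d hd (-((j + 1 : ℕ) : ℤ))
      rw [zpow_neg, zpow_natCast]
      exact eq_inv_of_mul_eq_one_left h1
  have hiq : ∀ j : ℕ, 1 - q ^ j * q ≠ 0 := fun j h => hqpow j (by linear_combination -h)
  have hIq : qPochInf q q ≠ 0 := qPochInf_ne_zero hq1 q hiq
  have hIa : ∀ d, qPochInf q (p d * w d) ≠ 0 := fun d => qPochInf_ne_zero hq1 _ (haq d)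
  have hIb : ∀ d, qPochInf q (q * w d) ≠ 0 := fun d => qPochInf_ne_zero hq1 _ (hbq d)
  have hCne : (∏ d, qPochInf q (p d * w d) / qPochInf q (q * w d)) ≠ 0 :=
    Finset.prod_ne_zero_iff.mpr fun d _ => div_ne_zero (hIa d) (hIb d)
  -- termwise identity
  have hterm : ∀ m : ℕ,
      (ζ ^ m * ∏ d, qPochFin q (p d * w d) m / qPochFin q (q * w d) m) =
      (∏ d, qPochInf q (p d * w d) / qPochInf q (q * w d)) *
        (ζ ^ m * ∏ d, qPochInf q (q ^ (1 + m) * w d) / qPochInf q (q ^ m * (p d * w d))) := by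
    intro m
    have h1 : ∀ d : Fin L, qPochFin q (p d * w d) m / qPochFin q (q * w d) m
        = (qPochInf q (p d * w d) / qPochInf q (q * w d)) *
          (qPochInf q (q ^ (1 + m) * w d) / qPochInf q (q ^ m * (p d * w d))) := by
      intro d
      have harg : q ^ m * (q * w d) = q ^ (1 + m) * w d := by ring
      rw [key_ratio hq1 (p d * w d) (q * w d) (haq d) (hbq d) m, harg]
    simp only [h1]
    rw [Finset.prod_mul_distrib]
    ring
  -- summability of the first series
  have htend : Tendsto (fun m => ∏ d, qPochFin q (p d * w d) m / qPochFin q (q * w d) m)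
      atTop (nhds (∏ d, qPochInf q (p d * w d) / qPochInf q (q * w d))) := by
    apply tendsto_finset_prod
    intro d _
    exact (qPochFin_tendsto hq1 _ (haq d)).div (qPochFin_tendsto hq1 _ (hbq d)) (hIb d)
  obtain ⟨B, hB⟩ : ∃ B, ∀ m, ‖∏ d, qPochFin q (p d * w d) m / qPochFin q (q * w d) m‖ ≤ B := by
    obtain ⟨B, hB⟩ := htend.norm.bddAbove_range
    exact ⟨B, fun m => hB (Set.mem_range_self m)⟩
  have hS1 : Summable (fun m : ℕ =>
      ‖ζ ^ m * ∏ d, qPochFin q (p d * w d) m / qPochFin q (q * w d) m‖) := by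
    refine Summable.of_nonneg_of_le (fun m => norm_nonneg _) (fun m => ?_)
      ((summable_geometric_of_lt_one (norm_nonneg ζ) hζ).mul_left B)
    rw [norm_mul, norm_pow, mul_comm]
    exact mul_le_mul_of_nonneg_right (hB m) (pow_nonneg (norm_nonneg ζ) m)
  -- summability of the second series
  have hS2 : Summable (fun m : ℕ =>
      ‖ζ ^ m * ∏ d, qPochInf q (q ^ (1 + m) * w d) / qPochInf q (q ^ m * (p d * w d))‖) := by
    apply (hS1.mul_left ‖(∏ d, qPochInf q (p d * w d) / qPochInf q (q * w d))⁻¹‖).congr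
    intro m
    rw [← norm_mul, hterm m, ← mul_assoc, inv_mul_cancel₀ hCne, one_mul]
  refine ⟨hS1, hS2, ?_⟩
  -- tsum identity
  have htsum : (∑' m : ℕ, ζ ^ m * ∏ d, qPochFin q (p d * w d) m / qPochFin q (q * w d) m)
      = (∏ d, qPochInf q (p d * w d) / qPochInf q (q * w d)) *
        (∑' m : ℕ, ζ ^ m *
          ∏ d, qPochInf q (q ^ (1 + m) * w d) / qPochInf q (q ^ m * (p d * w d))) := by
    rw [← tsum_mul_left]
    exact tsum_congr hterm
  -- prefactor identity
  have hCsplit : (∏ d, qPochInf q (p d * w d) / qPochInf q (q * w d))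
      = (qPochInf q (p k) / qPochInf q q) *
        ∏ d ∈ Finset.univ.erase k, qPochInf q (p d * w d) / qPochInf q (q * w d) := by
    rw [← Finset.mul_prod_erase Finset.univ _ (Finset.mem_univ k), hwk, mul_one, mul_one]
  have hth : ∀ d ∈ Finset.univ.erase k,
      thetaQ q (p d * w d) / thetaQ q (1 / w d) =
      (qPochInf q (p d * w d) / qPochInf q (q * w d)) *
        (qPochInf q (q / (p d * w d)) / qPochInf q (1 / w d)) := by
    intro d _
    rw [thetaQ, thetaQ, one_div, div_inv_eq_mul]
    ring
  have hpre : (qPochInf q (q / p k) / qPochInf q q) *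
      (∏ d ∈ Finset.univ.erase k, qPochInf q (q / (p d * w d)) / qPochInf q (1 / w d)) *
      (∏ d, qPochInf q (p d * w d) / qPochInf q (q * w d))
      = (thetaQ q (p k) / qPochInf q q) *
        (∏ d ∈ Finset.univ.erase k, thetaQ q (p d * w d) / thetaQ q (1 / w d)) *
        (qPochInf q q)⁻¹ := by
    rw [hCsplit, Finset.prod_congr rfl hth, Finset.prod_mul_distrib, thetaQ]
    ring
  rw [htsum]
  linear_combination (∑' m : ℕ, ζ ^ m *
    ∏ d, qPochInf q (q ^ (1 + m) * w d) / qPochInf q (q ^ m * (p d * w d))) * hpre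

end QPochAux
end

section
/- Let q ∈ ℂ with 0 < |q| < 1, let L ≥ 1 and k ∈ {1,…,L}, let x̃_1,…,x̃_L, z ∈ ℂ \ {0} and p_1,…,p_L ∈ ℂ \ {0}, and set P_k := ∏_{d=1}^k p_d. Define, for y ∈ ℂ \ {0}, Stab_k(y) := ∏_{d<k} Θ_q(x̃_d/y) · Θ_q( P_k x̃_k/(y z) ) · ∏_{d>k} Θ_q(p_d x̃_d/y). Then: (i) Stab_k(x̃_{k'}) = 0 for every k' < k; and (ii) if x̃_d/x̃_k ∉ { q^m : m ∈ ℤ } for all d < k, p_d x̃_d/x̃_k ∉ { q^m : m ∈ ℤ } for all d > k, and P_k/z ∉ { q^m : m ∈ ℤ }, then Stab_k(x̃_k) ≠ 0. -/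
lemma hasProd_zero_of_eq_zero {β : Type*} {f : β → ℂ} (b : β) (h : f b = 0) :
    HasProd f 0 := by
  have hev : ∀ᶠ s in Filter.atTop, ∏ i ∈ s, f i = (0 : ℂ) := by
    filter_upwards [Filter.eventually_ge_atTop ({b} : Finset β)] with s hs
    exact Finset.prod_eq_zero (hs (Finset.mem_singleton_self b)) h
  exact Filter.Tendsto.congr' (Filter.EventuallyEq.symm hev) tendsto_const_nhds

lemma qPochInf_one_eq_zero (q : ℂ) : qPochInf q 1 = 0 := by
  have : ((1 : ℂ) - q ^ (0 : ℕ) * 1) = 0 := by simp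
  exact (hasProd_zero_of_eq_zero 0 this).tprod_eq

lemma thetaQ_one_eq_zero (q : ℂ) : thetaQ q 1 = 0 := by
  simp [thetaQ, qPochInf_one_eq_zero]

lemma summable_log_qPoch {q : ℂ} (hq1 : ‖q‖ < 1) (w : ℂ) :
    Summable fun n : ℕ => Complex.log (1 - q ^ n * w) := by
  apply Summable.of_norm_bounded_eventually (g := fun n : ℕ => 3 / 2 * (‖q‖ ^ n * ‖w‖))
  · exact ((summable_geometric_of_lt_one (norm_nonneg q) hq1).mul_right _).mul_left _
  · have htend : Filter.Tendsto (fun n : ℕ => ‖q‖ ^ n * ‖w‖) Filter.atTop (nhds 0) := by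
      simpa using (tendsto_pow_atTop_nhds_zero_of_lt_one (norm_nonneg q) hq1).mul_const ‖w‖
    have hev : ∀ᶠ n : ℕ in Filter.atTop, ‖q‖ ^ n * ‖w‖ ≤ 1 / 2 := by
      filter_upwards [htend.eventually_le_const (by norm_num : (0:ℝ) < 1/2)] with n hn
      exact hn
    rw [Nat.cofinite_eq_atTop]
    filter_upwards [hev] with n hn
    have h1 : ‖-(q ^ n * w)‖ ≤ 1 / 2 := by
      rw [norm_neg, norm_mul, norm_pow]; exact hn
    have := Complex.norm_log_one_add_half_le_self h1
    calc ‖Complex.log (1 - q ^ n * w)‖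
        = ‖Complex.log (1 + -(q ^ n * w))‖ := by ring_nf
      _ ≤ 3 / 2 * ‖-(q ^ n * w)‖ := this
      _ = 3 / 2 * (‖q‖ ^ n * ‖w‖) := by rw [norm_neg, norm_mul, norm_pow]

lemma qPochInf_ne_zero_s12 {q : ℂ} (hq1 : ‖q‖ < 1) {w : ℂ}
    (hw : ∀ n : ℕ, 1 - q ^ n * w ≠ 0) : qPochInf q w ≠ 0 := by
  have key := Complex.cexp_tsum_eq_tprod (f := fun (n : ℕ) => 1 - q ^ n * w)
    (fun n => hw n) (summable_log_qPoch hq1 w)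
  have h := key
  rw [qPochInf, ← h]
  exact Complex.exp_ne_zero _

lemma thetaQ_ne_zero {q : ℂ} (hq : q ≠ 0) (hq1 : ‖q‖ < 1) {x : ℂ} (hx : x ≠ 0)
    (h : ∀ m : ℤ, x ≠ q ^ m) : thetaQ q x ≠ 0 := by
  apply mul_ne_zero
  · apply qPochInf_ne_zero_s12 hq1
    intro n hc
    apply h (-(n : ℤ))
    have hqn : q ^ n * x = 1 := by linear_combination -hc
    have : x = (q ^ n)⁻¹ := by
      field_simp at hqn ⊢
      linear_combination hqn
    rw [this, zpow_neg, zpow_natCast]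
  · apply qPochInf_ne_zero_s12 hq1
    intro n hc
    apply h ((n : ℤ) + 1)
    have hqn : q ^ n * (q / x) = 1 := by linear_combination -hc
    have : x = q ^ (n + 1) := by
      field_simp at hqn
      linear_combination -hqn
    rw [this, ← zpow_natCast]
    push_cast
    ring_nf

/-- Triangularity of the elliptic stable envelope: it vanishes at `y = x̃_{k'}` for `k' < k`,
and is nonzero at `y = x̃_k` under genericity assumptions. -/
theorem stmt12 (q : ℂ) (hq0 : 0 < ‖q‖) (hq1 : ‖q‖ < 1) (L : ℕ) (hL : 1 ≤ L) (k : Fin L)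
    (xt : Fin L → ℂ) (hx0 : ∀ d, xt d ≠ 0) (z : ℂ) (hz : z ≠ 0)
    (p : Fin L → ℂ) (hp : ∀ d, p d ≠ 0) :
    (∀ k' : Fin L, k' < k →
      (∏ d ∈ Finset.univ.filter (fun d => d < k), thetaQ q (xt d / xt k')) *
        thetaQ q ((∏ d ∈ Finset.univ.filter (fun d => d ≤ k), p d) * xt k / (xt k' * z)) *
        (∏ d ∈ Finset.univ.filter (fun d => k < d), thetaQ q (p d * xt d / xt k')) = 0) ∧
    ((∀ d, d < k → ∀ m : ℤ, xt d / xt k ≠ q ^ m) →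
      (∀ d, k < d → ∀ m : ℤ, p d * xt d / xt k ≠ q ^ m) →
      (∀ m : ℤ, (∏ d ∈ Finset.univ.filter (fun d => d ≤ k), p d) / z ≠ q ^ m) →
      (∏ d ∈ Finset.univ.filter (fun d => d < k), thetaQ q (xt d / xt k)) *
        thetaQ q ((∏ d ∈ Finset.univ.filter (fun d => d ≤ k), p d) * xt k / (xt k * z)) *
        (∏ d ∈ Finset.univ.filter (fun d => k < d), thetaQ q (p d * xt d / xt k)) ≠ 0) := by
  have hq : q ≠ 0 := by
    intro h; rw [h] at hq0; simp at hq0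
  constructor
  · intro k' hk'
    have hmem : k' ∈ Finset.univ.filter (fun d => d < k) := by
      simp [hk']
    have hzero : thetaQ q (xt k' / xt k') = 0 := by
      rw [div_self (hx0 k'), thetaQ_one_eq_zero]
    rw [Finset.prod_eq_zero hmem hzero, zero_mul, zero_mul]
  · intro h1 h2 h3
    apply mul_ne_zero
    apply mul_ne_zero
    · apply Finset.prod_ne_zero_iff.mpr
      intro d hd
      rw [Finset.mem_filter] at hd
      exact thetaQ_ne_zero hq hq1 (div_ne_zero (hx0 d) (hx0 k)) (h1 d hd.2)
    · have heq : (∏ d ∈ Finset.univ.filter (fun d => d ≤ k), p d) * xt k / (xt k * z)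
          = (∏ d ∈ Finset.univ.filter (fun d => d ≤ k), p d) / z := by
        rw [mul_comm (xt k) z, mul_div_mul_right _ _ (hx0 k)]
      rw [heq]
      apply thetaQ_ne_zero hq hq1 _ h3
      exact div_ne_zero (Finset.prod_ne_zero_iff.mpr fun d _ => hp d) hz
    · apply Finset.prod_ne_zero_iff.mpr
      intro d hd
      rw [Finset.mem_filter] at hd
      exact thetaQ_ne_zero hq hq1
        (div_ne_zero (mul_ne_zero (hp d) (hx0 d)) (hx0 k)) (h2 d hd.2)
end

section
/- Let β ∈ ℝ with β > 0 and let x ∈ ℂ with |x| < 1. Then lim_{q → 1⁻} ∏_{k=0}^∞ (1 − x q^k)/(1 − x q^{k+β}) = (1 − x)^β, where q ranges over real numbers in (0,1), q^{k+β} := exp((k+β) ln q), and (1 − x)^β := exp(β · Log(1 − x)) with the principal logarithm. -/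
open Filter Topology

open Complex


/-- Bound: for `t ∈ (0,1)`, `1 - t^β ≤ max β 1 * (1 - t)`. -/
lemma aux_rpow_bound {β t : ℝ} (hβ : 0 < β) (ht0 : 0 < t) (ht1 : t < 1) :
    1 - t ^ β ≤ max β 1 * (1 - t) := by
  rcases le_total β 1 with h | h
  · have h2 : t ^ (1:ℝ) ≤ t ^ β := Real.rpow_le_rpow_of_exponent_ge ht0 ht1.le h
    rw [Real.rpow_one] at h2
    nlinarith [le_max_right β 1]
  · have h2 := one_add_mul_self_le_rpow_one_add (by linarith : (-1:ℝ) ≤ t - 1) h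
    rw [add_sub_cancel] at h2
    nlinarith [le_max_left β 1]

/-- The key real limit: `(q^(β(m+1)) - 1)/(1 - q^(m+1)) → -β` as `q → 1⁻`. -/
lemma aux_ratio_tendsto (β : ℝ) (m : ℕ) :
    Tendsto (fun q : ℝ => (q ^ (β * (m + 1)) - 1) / (1 - q ^ (m + 1)))
      (𝓝[Set.Ioo (0:ℝ) 1] 1) (𝓝 (-β)) := by
  have hg : HasDerivAt (fun q : ℝ => q ^ (β * (m + 1) : ℝ)) (β * (m + 1)) 1 := by
    simpa using Real.hasDerivAt_rpow_const (x := 1) (p := β * (m + 1)) (Or.inl one_ne_zero)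
  have hh : HasDerivAt (fun q : ℝ => q ^ (m + 1)) ((m + 1 : ℕ)) 1 := by
    simpa using hasDerivAt_pow (m + 1) (1 : ℝ)
  have hgs := hasDerivAt_iff_tendsto_slope.mp hg
  have hhs := hasDerivAt_iff_tendsto_slope.mp hh
  have hne : ((m + 1 : ℕ) : ℝ) ≠ 0 := Nat.cast_ne_zero.mpr (Nat.succ_ne_zero m)
  have hdiv := hgs.div hhs hne
  have hmono : 𝓝[Set.Ioo (0:ℝ) 1] 1 ≤ 𝓝[≠] (1:ℝ) :=
    nhdsWithin_mono 1 (fun q hq => ne_of_lt hq.2)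
  have hdiv' := (hdiv.mono_left hmono).neg
  have hval : -(β * (m+1) / ((m + 1 : ℕ) : ℝ)) = -β := by
    push_cast; field_simp
  rw [hval] at hdiv'
  refine hdiv'.congr' ?_
  filter_upwards [eventually_mem_nhdsWithin] with q hq
  have hq1 : q - 1 ≠ 0 := sub_ne_zero.mpr (ne_of_lt hq.2)
  have hqp : q ^ (m+1) - 1 ≠ 0 :=
    sub_ne_zero.mpr (ne_of_lt (pow_lt_one₀ hq.1.le hq.2 (Nat.succ_ne_zero m)))
  have h1q : (1:ℝ) - q ^ (m+1) ≠ 0 :=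
    sub_ne_zero.mpr ((pow_lt_one₀ hq.1.le hq.2 (Nat.succ_ne_zero m)).ne')
  simp only [Pi.div_apply, slope_def_field, Real.one_rpow, one_pow]
  rw [div_div_div_eq]
  rw [← neg_div, div_eq_div_iff (mul_ne_zero hq1 hqp) h1q]
  ring

/-- The complex summand of the log of the product. -/
noncomputable def cterm (β : ℝ) (x : ℂ) (q : ℝ) (m : ℕ) : ℂ :=
  (x ^ (m + 1) / (m + 1)) * (((q ^ (β * (m + 1)) - 1) / (1 - q ^ (m + 1)) : ℝ) : ℂ)

lemma cterm_tendsto (β : ℝ) (x : ℂ) (m : ℕ) :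
    Tendsto (fun q : ℝ => cterm β x q m) (𝓝[Set.Ioo (0:ℝ) 1] 1)
      (𝓝 (x ^ (m + 1) / (m + 1) * ((-β : ℝ) : ℂ))) := by
  exact (((Complex.continuous_ofReal.tendsto _).comp (aux_ratio_tendsto β m)).const_mul _)

lemma cterm_bound {β : ℝ} (hβ : 0 < β) (x : ℂ) {q : ℝ} (hq : q ∈ Set.Ioo (0:ℝ) 1)
    (m : ℕ) : ‖cterm β x q m‖ ≤ max β 1 * ‖x‖ ^ (m + 1) := by
  obtain ⟨hq0, hq1⟩ := hq
  set t : ℝ := q ^ (m + 1) with ht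
  have ht0 : 0 < t := pow_pos hq0 _
  have ht1 : t < 1 := pow_lt_one₀ hq0.le hq1 (Nat.succ_ne_zero m)
  have hexp : q ^ (β * (m + 1) : ℝ) = t ^ β := by
    rw [ht, ← Real.rpow_natCast q (m + 1), ← Real.rpow_mul hq0.le]
    push_cast
    ring_nf
  have htb : t ^ β ≤ 1 := Real.rpow_le_one ht0.le ht1.le hβ.le
  have habs : |(t ^ β - 1) / (1 - t)| ≤ max β 1 := by
    rw [abs_div, abs_of_nonpos (by linarith), abs_of_pos (by linarith)]
    rw [div_le_iff₀ (by linarith)]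
    have := aux_rpow_bound hβ ht0 ht1
    linarith
  have h1 : ‖x ^ (m + 1) / ((m : ℂ) + 1)‖ ≤ ‖x‖ ^ (m + 1) := by
    rw [norm_div, norm_pow]
    refine div_le_self (pow_nonneg (norm_nonneg x) _) ?_
    have : ((m : ℂ) + 1) = ((m + 1 : ℕ) : ℂ) := by push_cast; ring
    rw [this, Complex.norm_natCast]
    exact_mod_cast Nat.one_le_iff_ne_zero.mpr (Nat.succ_ne_zero m)
  have h2 : ‖cterm β x q m‖ = ‖x ^ (m + 1) / ((m : ℂ) + 1)‖ * |(t ^ β - 1) / (1 - t)| := by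
    rw [cterm, norm_mul, Complex.norm_real, Real.norm_eq_abs, hexp]
  rw [h2, mul_comm (max β 1)]
  exact mul_le_mul h1 habs (abs_nonneg _) (pow_nonneg (norm_nonneg x) _)

lemma sum_cterm_tendsto {β : ℝ} (hβ : 0 < β) {x : ℂ} (hx : ‖x‖ < 1) :
    Tendsto (fun q : ℝ => ∑' m : ℕ, cterm β x q m) (𝓝[Set.Ioo (0:ℝ) 1] 1)
      (𝓝 (Complex.log (1 - x) * β)) := by
  have hgeo : Summable (fun m : ℕ => max β 1 * ‖x‖ ^ (m + 1)) := by
    refine Summable.congr (((summable_geometric_of_lt_one (norm_nonneg x) hx).mul_left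
      (max β 1 * ‖x‖))) (fun m => ?_)
    rw [pow_succ]; ring
  have hlim := tendsto_tsum_of_dominated_convergence hgeo (cterm_tendsto β x)
    (eventually_mem_nhdsWithin.mono fun q hq m => cterm_bound hβ x hq m)
  convert hlim using 2
  have hs : HasSum (fun n : ℕ => x ^ n / (n : ℂ)) (-Complex.log (1 - x)) :=
    Complex.hasSum_taylorSeries_neg_log hx
  have hs1 : HasSum (fun n : ℕ => x ^ (n + 1) / ((n : ℂ) + 1)) (-Complex.log (1 - x)) := by
    have h2 := (hasSum_nat_add_iff' (f := fun n : ℕ => x ^ n / (n : ℂ)) 1).mpr hs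
    simpa using h2
  have hs2 := hs1.mul_right ((-β : ℝ) : ℂ)
  rw [hs2.tsum_eq]
  push_cast
  ring

lemma prod_eq_exp {β : ℝ} (hβ : 0 < β) {x : ℂ} (hx : ‖x‖ < 1) {q : ℝ}
    (hq : q ∈ Set.Ioo (0:ℝ) 1) :
    (∏' k : ℕ, (1 - x * (q : ℂ) ^ k) / (1 - x * ((q ^ ((k : ℝ) + β) : ℝ) : ℂ))) =
      Complex.exp (∑' m : ℕ, cterm β x q m) := by
  classical
  obtain ⟨hq0, hq1⟩ := hq
  have hqn : ‖(q : ℂ)‖ = q := by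
    rw [Complex.norm_real, Real.norm_eq_abs, abs_of_pos hq0]
  -- the numerator and denominator arguments
  set u : ℕ → ℂ := fun k => x * (q : ℂ) ^ k with hu_def
  set v : ℕ → ℂ := fun k => x * ((q ^ ((k : ℝ) + β) : ℝ) : ℂ) with hv_def
  have hnu : ∀ k, ‖u k‖ ≤ ‖x‖ * q ^ k := by
    intro k
    rw [hu_def, norm_mul, norm_pow, hqn]
  have hnv : ∀ k, ‖v k‖ ≤ ‖x‖ * q ^ k := by
    intro k
    rw [hv_def, norm_mul, Complex.norm_real, Real.norm_eq_abs,
      abs_of_pos (Real.rpow_pos_of_pos hq0 _)]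
    refine mul_le_mul_of_nonneg_left ?_ (norm_nonneg x)
    rw [← Real.rpow_natCast q k]
    exact Real.rpow_le_rpow_of_exponent_ge hq0 hq1.le (by linarith)
  have hxq : ∀ k, ‖x‖ * q ^ k < 1 := by
    intro k
    have h1 : q ^ k ≤ 1 := pow_le_one₀ hq0.le hq1.le
    nlinarith [norm_nonneg x, pow_pos hq0 k]
  have hnu1 : ∀ k, ‖u k‖ < 1 := fun k => lt_of_le_of_lt (hnu k) (hxq k)
  have hnv1 : ∀ k, ‖v k‖ < 1 := fun k => lt_of_le_of_lt (hnv k) (hxq k)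
  have hne1 : ∀ z : ℂ, ‖z‖ < 1 → 1 - z ≠ 0 := by
    intro z hz h
    rw [sub_eq_zero] at h
    rw [← h] at hz
    simp at hz
  -- the log of each factor
  set c : ℕ → ℂ := fun k => Complex.log (1 - u k) - Complex.log (1 - v k) with hc_def
  have hck : ∀ k, HasSum (fun n : ℕ => (v k) ^ n / (n : ℂ) - (u k) ^ n / (n : ℂ)) (c k) := by
    intro k
    have h := (Complex.hasSum_taylorSeries_neg_log (hnv1 k)).sub
      (Complex.hasSum_taylorSeries_neg_log (hnu1 k))
    rw [hc_def]
    convert h using 1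
    · rfl
    ring
  -- the double series
  set T : ℕ × ℕ → ℂ := fun p => (v p.1) ^ p.2 / (p.2 : ℂ) - (u p.1) ^ p.2 / (p.2 : ℂ)
    with hT_def
  have hT : Summable T := by
    refine Summable.of_norm_bounded (g := fun p : ℕ × ℕ => q ^ p.1 * (2 * ‖x‖ ^ p.2)) ?_ ?_
    · have hg1 : Summable (fun k : ℕ => q ^ k) := summable_geometric_of_lt_one hq0.le hq1
      have hg2 : Summable (fun n : ℕ => 2 * ‖x‖ ^ n) :=
        (summable_geometric_of_lt_one (norm_nonneg x) hx).mul_left 2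
      exact hg1.mul_of_nonneg hg2 (fun k => (pow_pos hq0 k).le) (fun n => by positivity)
    · rintro ⟨k, n⟩
      rcases n with _ | n
      · have : T (k, 0) = 0 := by simp [hT_def]
        rw [this, norm_zero]
        positivity
      ·
        have key : ∀ w : ℕ → ℂ, (∀ j, ‖w j‖ ≤ ‖x‖ * q ^ j) →
            ‖(w k) ^ (n+1) / ((n+1 : ℕ) : ℂ)‖ ≤ ‖x‖ ^ (n+1) * q ^ k := by
          intro w hw
          have h1 : ‖(w k) ^ (n+1) / ((n+1 : ℕ) : ℂ)‖ ≤ ‖w k‖ ^ (n+1) := by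
            rw [norm_div, norm_pow, Complex.norm_natCast]
            refine div_le_self (pow_nonneg (norm_nonneg _) _) ?_
            exact_mod_cast Nat.one_le_iff_ne_zero.mpr (Nat.succ_ne_zero n)
          refine h1.trans ?_
          have h2 : ‖w k‖ ^ (n+1) ≤ (‖x‖ * q ^ k) ^ (n+1) :=
            pow_le_pow_left₀ (norm_nonneg _) (hw k) _
          refine h2.trans ?_
          rw [mul_pow, ← pow_mul]
          refine mul_le_mul_of_nonneg_left ?_ (pow_nonneg (norm_nonneg x) _)
          exact pow_le_pow_of_le_one hq0.le hq1.le (Nat.le_mul_of_pos_right k (Nat.succ_pos n))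
        have hv' := key v hnv
        have hu' := key u hnu
        have hsub : ‖T (k, n+1)‖ ≤ ‖(v k) ^ (n+1) / ((n+1 : ℕ) : ℂ)‖ +
            ‖(u k) ^ (n+1) / ((n+1 : ℕ) : ℂ)‖ := by
          rw [hT_def]
          push_cast
          exact norm_sub_le _ _
        refine hsub.trans ?_
        have : ‖x‖ ^ (n+1) * q ^ k + ‖x‖ ^ (n+1) * q ^ k = q ^ k * (2 * ‖x‖ ^ (n+1)) := by ring
        linarith
  -- summability of the logs
  have hsc : Summable c := by
    have h1 : Summable (fun k => ∑' n, T (k, n)) := hT.prod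
    refine h1.congr (fun k => ?_)
    exact (hck k).tsum_eq
  -- swap the order of summation
  have hswap : ∑' k, c k = ∑' n, ∑' k, T (k, n) := by
    have h1 : ∑' k, c k = ∑' k, ∑' n, T (k, n) :=
      tsum_congr fun k => ((hck k).tsum_eq).symm
    rw [h1]
    exact (Summable.tsum_comm (f := fun k n => T (k, n)) (by exact hT)).symm
  -- the inner sums
  have hinner0 : ∑' k : ℕ, T (k, 0) = 0 := by simp [hT_def]
  have hinner : ∀ n : ℕ, ∑' k : ℕ, T (k, n + 1) = cterm β x q n := by
    intro n
    set a : ℝ := q ^ (β : ℝ) with ha_def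
    have ha0 : 0 < a := Real.rpow_pos_of_pos hq0 _
    have hsplit : ∀ k : ℕ, ((q ^ ((k : ℝ) + β) : ℝ) : ℂ) = (q : ℂ) ^ k * (a : ℂ) := by
      intro k
      rw [Real.rpow_add hq0, Real.rpow_natCast]
      push_cast
      ring
    have hstep : (fun k : ℕ => T (k, n + 1)) =
        fun k : ℕ => (x ^ (n+1) * ((a : ℂ) ^ (n+1) - 1) / ((n : ℂ) + 1)) * ((q : ℂ) ^ (n+1)) ^ k := by
      funext k
      rw [hT_def]
      simp only [hu_def, hv_def]
      rw [hsplit k]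
      push_cast
      ring
    have hqnorm : ‖(q : ℂ) ^ (n+1)‖ < 1 := by
      rw [norm_pow, hqn]
      exact pow_lt_one₀ hq0.le hq1 (Nat.succ_ne_zero n)
    rw [hstep, tsum_mul_left, tsum_geometric_of_norm_lt_one hqnorm]
    -- now identify with `cterm`
    have hrw : ((q ^ (β * ((n : ℝ) + 1)) : ℝ) : ℂ) = (a : ℂ) ^ (n+1) := by
      rw [Real.rpow_mul hq0.le, ← ha_def]
      rw [show ((n : ℝ) + 1) = ((n + 1 : ℕ) : ℝ) by push_cast; ring]
      rw [Real.rpow_natCast]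
      push_cast
      ring
    have hden : ((1 - q ^ (n+1) : ℝ) : ℂ) = 1 - (q : ℂ) ^ (n+1) := by push_cast; ring
    have hdnz : (1 : ℂ) - (q : ℂ) ^ (n+1) ≠ 0 := by
      rw [← hden]
      rw [Complex.ofReal_ne_zero]
      have hlt : q ^ (n + 1) < 1 := pow_lt_one₀ hq0.le hq1 (Nat.succ_ne_zero n)
      intro hcon
      nlinarith
    have hnnz : ((n : ℂ) + 1) ≠ 0 := by
      exact_mod_cast Nat.cast_add_one_ne_zero (R := ℂ) n
    rw [cterm]
    push_cast [hrw]
    rw [div_eq_mul_inv (_ - (1:ℂ))]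
    ring
  -- assemble the sum identity
  have hTs : Summable (fun p : ℕ × ℕ => T p.swap) := hT.prod_symm
  have hsum_inner : Summable (fun n : ℕ => ∑' k : ℕ, T (k, n)) := hTs.prod
  have key : ∑' k, c k = ∑' m, cterm β x q m := by
    rw [hswap, hsum_inner.tsum_eq_zero_add, hinner0, zero_add]
    exact tsum_congr hinner
  -- each factor is the exponential of its log
  have hfac : ∀ k, Complex.exp (c k) =
      (1 - x * (q : ℂ) ^ k) / (1 - x * ((q ^ ((k : ℝ) + β) : ℝ) : ℂ)) := by
    intro k
    rw [hc_def, Complex.exp_sub, Complex.exp_log (hne1 _ (hnu1 k)),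
      Complex.exp_log (hne1 _ (hnv1 k))]
  have hprod := hsc.hasSum.cexp
  have hfun : Complex.exp ∘ c =
      fun k : ℕ => (1 - x * (q : ℂ) ^ k) / (1 - x * ((q ^ ((k : ℝ) + β) : ℝ) : ℂ)) :=
    funext fun k => hfac k
  rw [hfun] at hprod
  rw [hprod.tprod_eq, key]

/-- The conformal limit: for `β > 0` and `|x| < 1`,
`lim_{q → 1⁻} (x; q)_∞ / (x q^β; q)_∞ = (1 - x)^β`. -/
theorem stmt16 (β : ℝ) (hβ : 0 < β) (x : ℂ) (hx : ‖x‖ < 1) :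
    Tendsto
      (fun q : ℝ =>
        ∏' k : ℕ, (1 - x * (q : ℂ) ^ k) / (1 - x * ((q ^ ((k : ℝ) + β) : ℝ) : ℂ)))
      (𝓝[Set.Ioo (0 : ℝ) 1] 1) (𝓝 ((1 - x) ^ (β : ℂ))) := by
  have h1x : (1 : ℂ) - x ≠ 0 := by
    intro h
    rw [sub_eq_zero] at h
    rw [← h] at hx
    simp at hx
  have hexp : Tendsto (fun q : ℝ => Complex.exp (∑' m : ℕ, cterm β x q m))
      (𝓝[Set.Ioo (0:ℝ) 1] 1) (𝓝 (Complex.exp (Complex.log (1 - x) * β))) :=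
    (Complex.continuous_exp.tendsto _).comp (sum_cterm_tendsto hβ hx)
  have heq : ∀ᶠ q in 𝓝[Set.Ioo (0:ℝ) 1] 1,
      Complex.exp (∑' m : ℕ, cterm β x q m) =
        ∏' k : ℕ, (1 - x * (q : ℂ) ^ k) / (1 - x * ((q ^ ((k : ℝ) + β) : ℝ) : ℂ)) :=
    eventually_mem_nhdsWithin.mono fun q hq => (prod_eq_exp hβ hx hq).symm
  have hfin := hexp.congr' heq
  rw [Complex.cpow_def_of_ne_zero h1x]
  exact hfin
end
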